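/- For every t ≥ 0, the Lindblad semigroup exp(t𝓛̃) maps block-diagonal matrices to block-diagonal matrices; moreover, for block-diagonal initial data ∑_j ηⱼ(0) ⊗ Eⱼⱼ, the i-th diagonal block ηᵢ(t) of exp(t𝓛̃)[ ∑_j ηⱼ(0) ⊗ Eⱼⱼ ] is differentiable in t and satisfies d/dt ηᵢ(t) = 𝒦ᵢ(η₁(t),…,ηₙ(t)) for all t ≥ 0, while all off-diagonal blocks remain zero. -/

import Mathlib

open Matrix Kronecker

attribute [local instance] Matrix.linftyOpNormedAddCommGroup Matrix.linftyOpNormedRing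
  Matrix.linftyOpNormedAlgebra

/-- The Lindblad generator `𝓛[τ] = −i[H,τ] + ∑_γ ( A_γ τ A_γ* − ½{A_γ* A_γ, τ} )`,
as a continuous linear map on matrices. -/
noncomputable def lindbladCLM {N ι : Type*} [Fintype N] [DecidableEq N] [Fintype ι]
    (H : Matrix N N ℂ) (A : ι → Matrix N N ℂ) :
    Matrix N N ℂ →L[ℂ] Matrix N N ℂ :=
  LinearMap.toContinuousLinearMap
    ((-Complex.I) • (LinearMap.mulLeft ℂ H - LinearMap.mulRight ℂ H)
      + ∑ γ : ι, ((LinearMap.mulRight ℂ (A γ)ᴴ).comp (LinearMap.mulLeft ℂ (A γ))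
          - (1/2 : ℂ) • (LinearMap.mulLeft ℂ ((A γ)ᴴ * A γ)
              + LinearMap.mulRight ℂ ((A γ)ᴴ * A γ))))

/-- The Lindblad rate generator
`𝒦ᵢ(τ₁,…,τₙ) = −i[Hⁱ,τᵢ] + ∑_{α∈A} ∑_k ( R^{ik}_α τ_k (R^{ik}_α)* − ½{(R^{ki}_α)* R^{ki}_α, τᵢ} )`. -/
noncomputable def Kgen {n d : ℕ} {A : Type*} [Fintype A]
    (H : Fin n → Matrix (Fin d) (Fin d) ℂ)
    (R : A → Fin n → Fin n → Matrix (Fin d) (Fin d) ℂ)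
    (τ : Fin n → Matrix (Fin d) (Fin d) ℂ) (i : Fin n) :
    Matrix (Fin d) (Fin d) ℂ :=
  -Complex.I • (H i * τ i - τ i * H i)
    + ∑ α : A, ∑ k : Fin n,
      (R α i k * τ k * (R α i k)ᴴ
        - (1/2 : ℂ) • ((R α k i)ᴴ * R α k i * τ i + τ i * ((R α k i)ᴴ * R α k i)))

/-- The extended Lindblad generator `𝓛̃` on `M_d(ℂ) ⊗ M_n(ℂ)`, built from
`H = ∑ᵢ Hⁱ ⊗ Eᵢᵢ` and the Lindblad operators `S^{ij}_α = R^{ij}_α ⊗ Eᵢⱼ`. -/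
noncomputable def LtildeCLM {n d : ℕ} {A : Type*} [Fintype A]
    (H : Fin n → Matrix (Fin d) (Fin d) ℂ)
    (R : A → Fin n → Fin n → Matrix (Fin d) (Fin d) ℂ) :
    Matrix (Fin d × Fin n) (Fin d × Fin n) ℂ →L[ℂ]
      Matrix (Fin d × Fin n) (Fin d × Fin n) ℂ :=
  lindbladCLM (∑ i : Fin n, H i ⊗ₖ single i i (1 : ℂ))
    (fun x : A × Fin n × Fin n => R x.1 x.2.1 x.2.2 ⊗ₖ single x.2.1 x.2.2 (1 : ℂ))

/-- The `i`-th diagonal block of a matrix on `ℋ_S ⊗ ℂⁿ` (compression by `I_d ⊗ Eᵢᵢ`). -/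
def blk {n d : ℕ} (X : Matrix (Fin d × Fin n) (Fin d × Fin n) ℂ) (i : Fin n) :
    Matrix (Fin d) (Fin d) ℂ :=
  Matrix.of fun a c => X (a, i) (c, i)

instance instIsTopologicalRingMatrixCLM {N : Type*} [Fintype N] [DecidableEq N] :
    IsTopologicalRing (Matrix N N ℂ →L[ℂ] Matrix N N ℂ) := by
  let _ : NormedRing (Matrix N N ℂ →L[ℂ] Matrix N N ℂ) := ContinuousLinearMap.toNormedRing
  exact NonUnitalSeminormedRing.toIsTopologicalRing

section LindbladHelpers

open Nat

variable {n d : ℕ}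

private lemma kron_std_conjT (M : Matrix (Fin d) (Fin d) ℂ) (i j : Fin n) :
    (M ⊗ₖ single i j (1 : ℂ))ᴴ = Mᴴ ⊗ₖ single j i (1 : ℂ) := by
  ext ⟨a, p⟩ ⟨b, q⟩
  by_cases h1 : i = q <;> by_cases h2 : j = p <;>
    simp [conjTranspose_apply, Matrix.single, h1, h2]

private lemma kron_mul_kron (M M' : Matrix (Fin d) (Fin d) ℂ) (i j k l : Fin n) :
    (M ⊗ₖ single i j (1:ℂ)) * (M' ⊗ₖ single k l (1:ℂ))
      = if j = k then (M * M') ⊗ₖ single i l (1:ℂ) else 0 := by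
  rw [← mul_kronecker_mul]
  by_cases h : j = k
  · subst h
    simp
  · rw [single_mul_single_of_ne (1:ℂ) i j k h (1:ℂ), if_neg h]
    ext ⟨a, p⟩ ⟨b, q⟩
    simp

private lemma sum_kron {ι : Type*} (s : Finset ι) (f : ι → Matrix (Fin d) (Fin d) ℂ)
    (B : Matrix (Fin n) (Fin n) ℂ) :
    (∑ i ∈ s, f i) ⊗ₖ B = ∑ i ∈ s, f i ⊗ₖ B := by
  ext ⟨a, p⟩ ⟨b, q⟩
  simp [Matrix.sum_apply, Finset.sum_mul]

private lemma sub_kron (M M' : Matrix (Fin d) (Fin d) ℂ) (B : Matrix (Fin n) (Fin n) ℂ) :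
    (M - M') ⊗ₖ B = M ⊗ₖ B - M' ⊗ₖ B := by
  ext ⟨a, p⟩ ⟨b, q⟩
  simp [sub_mul]

private lemma smul_kron (c : ℂ) (M : Matrix (Fin d) (Fin d) ℂ) (B : Matrix (Fin n) (Fin n) ℂ) :
    (c • M) ⊗ₖ B = c • (M ⊗ₖ B) := by
  ext ⟨a, p⟩ ⟨b, q⟩
  simp [smul_mul_assoc, mul_assoc]

private lemma add_kron (M M' : Matrix (Fin d) (Fin d) ℂ) (B : Matrix (Fin n) (Fin n) ℂ) :
    (M + M') ⊗ₖ B = M ⊗ₖ B + M' ⊗ₖ B := by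
  ext ⟨a, p⟩ ⟨b, q⟩
  simp [add_mul]

private lemma lindbladCLM_apply {N ι : Type*} [Fintype N] [DecidableEq N] [Fintype ι]
    (H : Matrix N N ℂ) (A : ι → Matrix N N ℂ) (X : Matrix N N ℂ) :
    lindbladCLM H A X = (-Complex.I) • (H * X - X * H)
      + ∑ γ : ι, (A γ * X * (A γ)ᴴ
          - (1/2 : ℂ) • ((A γ)ᴴ * A γ * X + X * ((A γ)ᴴ * A γ))) := by
  simp [lindbladCLM, LinearMap.sum_apply, mul_assoc, smul_add, Finset.sum_sub_distrib,
    smul_sub, sub_eq_add_neg, neg_add]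

variable {A : Type*} [Fintype A]

private lemma Ltilde_apply_blockDiag (H : Fin n → Matrix (Fin d) (Fin d) ℂ)
    (R : A → Fin n → Fin n → Matrix (Fin d) (Fin d) ℂ)
    (τ : Fin n → Matrix (Fin d) (Fin d) ℂ) :
    LtildeCLM H R (∑ j : Fin n, τ j ⊗ₖ single j j (1:ℂ))
      = ∑ i : Fin n, Kgen H R τ i ⊗ₖ single i i (1:ℂ) := by
  set X := ∑ j : Fin n, τ j ⊗ₖ single j j (1:ℂ) with hX
  have hL : ∀ (M : Matrix (Fin d) (Fin d) ℂ) (k l : Fin n),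
      (M ⊗ₖ single k l (1:ℂ)) * X = (M * τ l) ⊗ₖ single k l (1:ℂ) := by
    intro M k l
    rw [hX, Finset.mul_sum]
    simp [kron_mul_kron, Finset.sum_ite_eq]
  have hR : ∀ (M : Matrix (Fin d) (Fin d) ℂ) (k l : Fin n),
      X * (M ⊗ₖ single k l (1:ℂ)) = (τ k * M) ⊗ₖ single k l (1:ℂ) := by
    intro M k l
    rw [hX, Finset.sum_mul]
    simp [kron_mul_kron, Finset.sum_ite_eq']
  rw [LtildeCLM, lindbladCLM_apply]
  have hHam : (∑ i : Fin n, H i ⊗ₖ single i i (1:ℂ)) * X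
      - X * (∑ i : Fin n, H i ⊗ₖ single i i (1:ℂ))
      = ∑ i : Fin n, (H i * τ i - τ i * H i) ⊗ₖ single i i (1:ℂ) := by
    rw [Finset.sum_mul, Finset.mul_sum, ← Finset.sum_sub_distrib]
    exact Finset.sum_congr rfl fun i _ => by rw [hL, hR, sub_kron]
  rw [hHam]
  have hterm : ∀ (α : A) (k l : Fin n),
      (R α k l ⊗ₖ single k l (1:ℂ)) * X * (R α k l ⊗ₖ single k l (1:ℂ))ᴴ
        - (1/2:ℂ) • ((R α k l ⊗ₖ single k l (1:ℂ))ᴴ * (R α k l ⊗ₖ single k l (1:ℂ)) * X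
            + X * ((R α k l ⊗ₖ single k l (1:ℂ))ᴴ * (R α k l ⊗ₖ single k l (1:ℂ))))
      = (R α k l * τ l * (R α k l)ᴴ) ⊗ₖ single k k (1:ℂ)
        - (1/2:ℂ) • (((R α k l)ᴴ * R α k l * τ l + τ l * ((R α k l)ᴴ * R α k l))
            ⊗ₖ single l l (1:ℂ)) := by
    intro α k l
    have hSS : (R α k l ⊗ₖ single k l (1:ℂ))ᴴ * (R α k l ⊗ₖ single k l (1:ℂ))
        = ((R α k l)ᴴ * R α k l) ⊗ₖ single l l (1:ℂ) := by
      rw [kron_std_conjT, kron_mul_kron, if_pos rfl]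
    rw [hSS, hL, hL, hR, ← add_kron, kron_std_conjT, kron_mul_kron, if_pos rfl]
  have hsum : ∑ x : A × Fin n × Fin n,
      ((R x.1 x.2.1 x.2.2 ⊗ₖ single x.2.1 x.2.2 (1:ℂ)) * X
          * (R x.1 x.2.1 x.2.2 ⊗ₖ single x.2.1 x.2.2 (1:ℂ))ᴴ
        - (1/2:ℂ) • ((R x.1 x.2.1 x.2.2 ⊗ₖ single x.2.1 x.2.2 (1:ℂ))ᴴ
              * (R x.1 x.2.1 x.2.2 ⊗ₖ single x.2.1 x.2.2 (1:ℂ)) * X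
            + X * ((R x.1 x.2.1 x.2.2 ⊗ₖ single x.2.1 x.2.2 (1:ℂ))ᴴ
              * (R x.1 x.2.1 x.2.2 ⊗ₖ single x.2.1 x.2.2 (1:ℂ)))))
      = ∑ α : A, ∑ k : Fin n, ∑ l : Fin n,
          ((R α k l * τ l * (R α k l)ᴴ) ⊗ₖ single k k (1:ℂ)
            - (1/2:ℂ) • (((R α k l)ᴴ * R α k l * τ l + τ l * ((R α k l)ᴴ * R α k l))
                ⊗ₖ single l l (1:ℂ))) := by
    rw [Fintype.sum_prod_type]
    refine Finset.sum_congr rfl fun α _ => ?_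
    rw [Fintype.sum_prod_type]
    exact Finset.sum_congr rfl fun k _ => Finset.sum_congr rfl fun l _ => hterm α k l
  rw [hsum]
  have hK : ∀ i : Fin n, Kgen H R τ i ⊗ₖ single i i (1:ℂ)
      = -Complex.I • ((H i * τ i - τ i * H i) ⊗ₖ single i i (1:ℂ))
        + ∑ α : A, ∑ k : Fin n,
          ((R α i k * τ k * (R α i k)ᴴ) ⊗ₖ single i i (1:ℂ)
            - (1/2:ℂ) • (((R α k i)ᴴ * R α k i * τ i + τ i * ((R α k i)ᴴ * R α k i))
                ⊗ₖ single i i (1:ℂ))) := by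
    intro i
    rw [Kgen, add_kron, smul_kron, sum_kron]
    congr 1
    refine Finset.sum_congr rfl fun α _ => ?_
    rw [sum_kron]
    exact Finset.sum_congr rfl fun k _ => by rw [sub_kron, smul_kron]
  rw [Finset.sum_congr rfl fun i _ => hK i, Finset.sum_add_distrib]
  congr 1
  · rw [Finset.smul_sum]
  · simp only [Finset.sum_sub_distrib]
    rw [Finset.sum_comm]
    congr 1
    conv_rhs => rw [Finset.sum_comm]
    refine Finset.sum_congr rfl fun α _ => ?_
    exact Finset.sum_comm

/-- The submodule of matrices with vanishing off-diagonal blocks. -/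
noncomputable def offV (n d : ℕ) : Submodule ℂ (Matrix (Fin d × Fin n) (Fin d × Fin n) ℂ) where
  carrier := {X | ∀ p q : Fin d × Fin n, p.2 ≠ q.2 → X p q = 0}
  add_mem' := fun {X} {Y} hX hY p q h => by
    simp [Matrix.add_apply, hX p q h, hY p q h]
  zero_mem' := fun p q _ => rfl
  smul_mem' := fun c {X} hX p q h => by
    simp [Matrix.smul_apply, hX p q h]

private lemma std_apply (j p q : Fin n) :
    single j j (1:ℂ) p q = if j = p ∧ j = q then 1 else 0 := rfl

private lemma bd_mem (τ : Fin n → Matrix (Fin d) (Fin d) ℂ) :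
    (∑ j : Fin n, τ j ⊗ₖ single j j (1:ℂ)) ∈ offV n d := by
  intro p q h
  rw [Matrix.sum_apply]
  refine Finset.sum_eq_zero fun j _ => ?_
  rw [kroneckerMap_apply, std_apply,
    if_neg (fun hc => h (hc.1.symm.trans hc.2)), mul_zero]

private lemma eq_sum_blk {X : Matrix (Fin d × Fin n) (Fin d × Fin n) ℂ}
    (hX : X ∈ offV n d) :
    X = ∑ j : Fin n, blk X j ⊗ₖ single j j (1:ℂ) := by
  ext ⟨a, i⟩ ⟨c, j⟩
  rw [Matrix.sum_apply]
  rcases eq_or_ne i j with h | h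
  · subst h
    rw [Finset.sum_eq_single i]
    · simp [blk]
    · intro k _ hk
      rw [kroneckerMap_apply, std_apply, if_neg (fun hc => hk hc.1), mul_zero]
    · simp
  · rw [hX (a, i) (c, j) h]
    symm
    refine Finset.sum_eq_zero fun k _ => ?_
    rw [kroneckerMap_apply, std_apply, if_neg (fun hc => h (hc.1.symm.trans hc.2)), mul_zero]

private lemma blk_sum (τ : Fin n → Matrix (Fin d) (Fin d) ℂ) (i : Fin n) :
    blk (∑ j : Fin n, τ j ⊗ₖ single j j (1:ℂ)) i = τ i := by
  ext a c
  show (∑ j : Fin n, τ j ⊗ₖ single j j (1:ℂ)) (a, i) (c, i) = τ i a c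
  rw [Matrix.sum_apply, Finset.sum_eq_single i]
  · simp
  · intro k _ hk
    rw [kroneckerMap_apply, std_apply, if_neg (fun hc => hk hc.1), mul_zero]
  · simp

private lemma exp_memV {T : Matrix (Fin d × Fin n) (Fin d × Fin n) ℂ →L[ℂ]
      Matrix (Fin d × Fin n) (Fin d × Fin n) ℂ}
    (hT : ∀ X ∈ offV n d, T X ∈ offV n d)
    {X : Matrix (Fin d × Fin n) (Fin d × Fin n) ℂ} (hX : X ∈ offV n d) :
    NormedSpace.exp T X ∈ offV n d := by
  letI : NormedRing (Matrix (Fin d × Fin n) (Fin d × Fin n) ℂ →L[ℂ] Matrix (Fin d × Fin n) (Fin d × Fin n) ℂ) := ContinuousLinearMap.toNormedRing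
  letI : NormedAlgebra ℂ (Matrix (Fin d × Fin n) (Fin d × Fin n) ℂ →L[ℂ] Matrix (Fin d × Fin n) (Fin d × Fin n) ℂ) := ContinuousLinearMap.toNormedAlgebra
  haveI : @CompleteSpace (Matrix (Fin d × Fin n) (Fin d × Fin n) ℂ →L[ℂ] Matrix (Fin d × Fin n) (Fin d × Fin n) ℂ) PseudoMetricSpace.toUniformSpace := by
    have := FiniteDimensional.complete ℂ (Matrix (Fin d × Fin n) (Fin d × Fin n) ℂ →L[ℂ] Matrix (Fin d × Fin n) (Fin d × Fin n) ℂ)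
    exact this
  have hpow : ∀ k : ℕ, ∀ Y ∈ offV n d, (T ^ k) Y ∈ offV n d := by
    intro k
    induction k with
    | zero => intro Y hY; simpa using hY
    | succ k ih =>
      intro Y hY
      rw [pow_succ, ContinuousLinearMap.mul_apply]
      exact ih _ (hT _ hY)
  have hs : Summable fun k : ℕ => (k ! : ℂ)⁻¹ • T ^ k := NormedSpace.expSeries_summable' T
  have hmap : HasSum (fun k : ℕ => ((k ! : ℂ)⁻¹ • T ^ k) X) (NormedSpace.exp T X) := by
    rw [NormedSpace.exp_eq_tsum (𝕂 := ℂ)]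
    exact hs.hasSum.mapL (ContinuousLinearMap.apply ℂ _ X)
  refine (Submodule.closed_of_finiteDimensional (offV n d)).mem_of_tendsto hmap
    (Filter.Eventually.of_forall fun s => ?_)
  exact Submodule.sum_mem _ fun k _ => by
    rw [ContinuousLinearMap.smul_apply]
    exact Submodule.smul_mem _ _ (hpow k X hX)

private lemma hasDerivAt_real {E : Type*} [NormedAddCommGroup E] [NormedSpace ℂ E]
    {f : ℂ → E} {D : E} {t : ℝ} (h : HasDerivAt f D (t : ℂ)) :
    HasDerivAt (fun s : ℝ => f s) D t := by
  simpa [Function.comp_def] using (h.hasFDerivAt.restrictScalars ℝ).comp_hasDerivAt t Complex.ofRealCLM.hasDerivAt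

end LindbladHelpers


/-- For every `t ≥ 0` the semigroup `exp(t𝓛̃)` maps block-diagonal matrices to block-diagonal
matrices; moreover for block-diagonal initial data `∑ⱼ ηⱼ(0) ⊗ Eⱼⱼ` the diagonal blocks
`ηᵢ(t)` of `exp(t𝓛̃)[∑ⱼ ηⱼ(0) ⊗ Eⱼⱼ]` are differentiable in `t` and satisfy the Lindblad
rate equation `d/dt ηᵢ(t) = 𝒦ᵢ(η₁(t),…,ηₙ(t))`, while all off-diagonal blocks remain zero. -/
theorem exp_ltilde_blockDiagonal {n d : ℕ} (hn : 1 ≤ n) (hd : 1 ≤ d)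
    {A : Type*} [Fintype A]
    (H : Fin n → Matrix (Fin d) (Fin d) ℂ) (hH : ∀ i, (H i).IsHermitian)
    (R : A → Fin n → Fin n → Matrix (Fin d) (Fin d) ℂ)
    (η0 : Fin n → Matrix (Fin d) (Fin d) ℂ) :
    (∀ X : Matrix (Fin d × Fin n) (Fin d × Fin n) ℂ,
      (∀ p q, p.2 ≠ q.2 → X p q = 0) →
      ∀ t : ℝ, 0 ≤ t → ∀ p q, p.2 ≠ q.2 →
        NormedSpace.exp ((t : ℂ) • LtildeCLM H R) X p q = 0) ∧
    (∀ t : ℝ, 0 ≤ t → ∀ i : Fin n,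
      HasDerivAt
        (fun s : ℝ => blk
          (NormedSpace.exp ((s : ℂ) • LtildeCLM H R)
            (∑ j : Fin n, η0 j ⊗ₖ single j j (1 : ℂ))) i)
        (Kgen H R
          (fun j => blk
            (NormedSpace.exp ((t : ℂ) • LtildeCLM H R)
              (∑ j : Fin n, η0 j ⊗ₖ single j j (1 : ℂ))) j) i)
        t) := by
  classical
  have hLV : ∀ X ∈ offV n d, LtildeCLM H R X ∈ offV n d := by
    intro X hX
    rw [eq_sum_blk hX, Ltilde_apply_blockDiag]
    exact bd_mem _
  have hTs : ∀ s : ℝ, ∀ Y ∈ offV n d, (((s : ℂ)) • LtildeCLM H R) Y ∈ offV n d := by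
    intro s Y hY
    rw [ContinuousLinearMap.smul_apply]
    exact Submodule.smul_mem _ _ (hLV Y hY)
  constructor
  · intro X hX t _ p q hpq
    exact exp_memV (hTs t) (fun p q h => hX p q h) p q hpq
  · intro t _ i
    letI : NormedRing (Matrix (Fin d × Fin n) (Fin d × Fin n) ℂ →L[ℂ] Matrix (Fin d × Fin n) (Fin d × Fin n) ℂ) := ContinuousLinearMap.toNormedRing
    letI : NormedAlgebra ℂ (Matrix (Fin d × Fin n) (Fin d × Fin n) ℂ →L[ℂ] Matrix (Fin d × Fin n) (Fin d × Fin n) ℂ) := ContinuousLinearMap.toNormedAlgebra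
    haveI : @CompleteSpace (Matrix (Fin d × Fin n) (Fin d × Fin n) ℂ →L[ℂ] Matrix (Fin d × Fin n) (Fin d × Fin n) ℂ) PseudoMetricSpace.toUniformSpace := by
      have := FiniteDimensional.complete ℂ (Matrix (Fin d × Fin n) (Fin d × Fin n) ℂ →L[ℂ] Matrix (Fin d × Fin n) (Fin d × Fin n) ℂ)
      exact this
    haveI : ContinuousSMul ℝ (Matrix (Fin d × Fin n) (Fin d × Fin n) ℂ →L[ℂ] Matrix (Fin d × Fin n) (Fin d × Fin n) ℂ) := by
      letI : NormedSpace ℝ (Matrix (Fin d × Fin n) (Fin d × Fin n) ℂ →L[ℂ] Matrix (Fin d × Fin n) (Fin d × Fin n) ℂ) := NormedSpace.complexToReal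
      have hb : IsBoundedSMul ℝ (Matrix (Fin d × Fin n) (Fin d × Fin n) ℂ →L[ℂ] Matrix (Fin d × Fin n) (Fin d × Fin n) ℂ) := NormedSpace.toIsBoundedSMul
      exact IsBoundedSMul.continuousSMul
    set L := LtildeCLM H R with hLdef
    set X0 := ∑ j : Fin n, η0 j ⊗ₖ single j j (1 : ℂ) with hX0def
    have hX0 : X0 ∈ offV n d := bd_mem _
    have hYmem : NormedSpace.exp ((t : ℂ) • L) X0 ∈ offV n d := exp_memV (hTs t) hX0
    have hC : HasDerivAt (fun z : ℂ => NormedSpace.exp (z • L))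
        (L * NormedSpace.exp ((t : ℂ) • L)) (t : ℂ) :=
      hasDerivAt_exp_smul_const' L (t : ℂ)
    have hRd : HasDerivAt (fun s : ℝ => NormedSpace.exp ((s : ℂ) • L))
        (L * NormedSpace.exp ((t : ℂ) • L)) t := hasDerivAt_real hC
    let blkL : Matrix (Fin d × Fin n) (Fin d × Fin n) ℂ →L[ℂ] Matrix (Fin d) (Fin d) ℂ :=
      LinearMap.toContinuousLinearMap
        { toFun := fun X => blk X i
          map_add' := fun X Y => by ext a c; rfl
          map_smul' := fun c X => by ext a b; rfl }
    let C : (Matrix (Fin d × Fin n) (Fin d × Fin n) ℂ →L[ℂ]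
        Matrix (Fin d × Fin n) (Fin d × Fin n) ℂ) →L[ℂ] Matrix (Fin d) (Fin d) ℂ :=
      blkL.comp (ContinuousLinearMap.apply ℂ (Matrix (Fin d × Fin n) (Fin d × Fin n) ℂ) X0)
    have hfin0 := ((C.restrictScalars ℝ).hasFDerivAt).comp_hasDerivAt t hRd
    have hfin : HasDerivAt (fun s : ℝ => blk (NormedSpace.exp ((s : ℂ) • L) X0) i)
        (blk ((L * NormedSpace.exp ((t : ℂ) • L)) X0) i) t := by
      exact hfin0
    have hval : blk ((L * NormedSpace.exp ((t : ℂ) • L)) X0) i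
        = Kgen H R (fun j => blk (NormedSpace.exp ((t : ℂ) • L) X0) j) i := by
      rw [ContinuousLinearMap.mul_apply]
      conv_lhs => rw [eq_sum_blk hYmem]
      rw [hLdef, Ltilde_apply_blockDiag, blk_sum]
    exact hval ▸ hfin
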